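/- Let ε > 0, λ > 0, and T > 0. Suppose that for every channel i with 1 ≤ i ≤ K, the vectors ( (φ_j(y_l))_{l=0,…,M} )_{j∈I_i} are linearly independent in ℝ^{M+1}. Then the regularized objective function ω ↦ (1/T)·[ −Σ_{i=1}^K Σ_{k=1}^{M_i} ln G_ε( Σ_{j∈I_i} ω_j φ_j(y_{l^{(i)}_k}) ) + Σ_{l=0}^M t_l·Σ_{i=1}^K G_ε( Σ_{j∈I_i} ω_j φ_j(y_l) ) ] + λ·Σ_{j=1}^N |ω_j| is strictly convex on all of ℝ^N. -/

import Mathlib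

open Finset

/-- For `ε > 0`, the smooth approximation `G_ε(x) = ε · ln(1 + exp(x/ε))` of `max(x, 0)`. -/
noncomputable def Geps (ε x : ℝ) : ℝ := ε * Real.log (1 + Real.exp (x / ε))


lemma Geps_pos {ε : ℝ} (hε : 0 < ε) (x : ℝ) : 0 < Geps ε x :=
  mul_pos hε (Real.log_pos (by linarith [Real.exp_pos (x / ε)]))

lemma one_add_exp_pos (u : ℝ) : (0:ℝ) < 1 + Real.exp u := by positivity

lemma hasDerivAt_Geps {ε : ℝ} (hε : 0 < ε) (x : ℝ) :
    HasDerivAt (Geps ε) (Real.exp (x / ε) / (1 + Real.exp (x / ε))) x := by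
  have h1 : HasDerivAt (fun x : ℝ => x / ε) (1 / ε) x := by
    simpa using (hasDerivAt_id x).div_const ε
  have h2 := h1.exp
  have h3 := (h2.const_add 1)
  have h4 := h3.log (ne_of_gt (one_add_exp_pos (x / ε)))
  have h5 := h4.const_mul ε
  refine h5.congr_deriv ?_
  field_simp

lemma deriv_Geps {ε : ℝ} (hε : 0 < ε) :
    deriv (Geps ε) = fun x => Real.exp (x / ε) / (1 + Real.exp (x / ε)) := by
  funext x; exact (hasDerivAt_Geps hε x).deriv

lemma hasDerivAt_sigma {ε : ℝ} (hε : 0 < ε) (x : ℝ) :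
    HasDerivAt (fun x => Real.exp (x / ε) / (1 + Real.exp (x / ε)))
      (Real.exp (x / ε) / (ε * (1 + Real.exp (x / ε)) ^ 2)) x := by
  have h1 : HasDerivAt (fun x : ℝ => x / ε) (1 / ε) x := by
    simpa using (hasDerivAt_id x).div_const ε
  have h2 := h1.exp
  have h3 := h2.const_add 1
  have h := h2.div h3 (ne_of_gt (one_add_exp_pos (x / ε)))
  refine h.congr_deriv ?_
  field_simp
  ring

lemma Geps_strictConvexOn {ε : ℝ} (hε : 0 < ε) : StrictConvexOn ℝ Set.univ (Geps ε) := by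
  apply strictConvexOn_univ_of_deriv2_pos
  · exact continuous_const.mul ((continuous_const.add ((continuous_id.div_const ε).rexp)).log
      (fun x => ne_of_gt (one_add_exp_pos (x / ε))))
  · intro x
    have : deriv^[2] (Geps ε) x = Real.exp (x / ε) / (ε * (1 + Real.exp (x / ε)) ^ 2) := by
      show deriv (deriv (Geps ε)) x = _
      rw [deriv_Geps hε]
      exact (hasDerivAt_sigma hε x).deriv
    rw [this]
    positivity

lemma negLogGeps_convexOn {ε : ℝ} (hε : 0 < ε) :
    ConvexOn ℝ Set.univ (fun x => -Real.log (Geps ε x)) := by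
  have hcont : Continuous (Geps ε) :=
    continuous_const.mul ((continuous_const.add ((continuous_id.div_const ε).rexp)).log
      (fun x => ne_of_gt (one_add_exp_pos (x / ε))))
  apply convexOn_of_hasDerivWithinAt2_nonneg (f' := fun x =>
      -(Real.exp (x / ε) / (1 + Real.exp (x / ε)) / Geps ε x))
    (f'' := fun x => ((Real.exp (x / ε) / (1 + Real.exp (x / ε)))^2
      - (Real.exp (x / ε) / (ε * (1 + Real.exp (x / ε)) ^ 2)) * Geps ε x) / (Geps ε x)^2)
    convex_univ
  · exact ((hcont.log (fun x => ne_of_gt (Geps_pos hε x))).neg).continuousOn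
  · intro x _
    exact (((hasDerivAt_Geps hε x).log (ne_of_gt (Geps_pos hε x))).neg).hasDerivWithinAt
  · intro x _
    have h := (((hasDerivAt_sigma hε x).div (hasDerivAt_Geps hε x)
      (ne_of_gt (Geps_pos hε x))).neg)
    refine (HasDerivAt.hasDerivWithinAt ?_)
    refine h.congr_deriv ?_
    field_simp
    ring
  · intro x _
    have hG := Geps_pos hε x
    have he := Real.exp_pos (x / ε)
    have h1 : (0:ℝ) < 1 + Real.exp (x / ε) := one_add_exp_pos _
    apply div_nonneg _ (sq_nonneg _)
    have key : Real.log (1 + Real.exp (x / ε)) ≤ Real.exp (x / ε) := by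
      have := Real.log_le_sub_one_of_pos h1
      linarith
    have : (Real.exp (x / ε) / (ε * (1 + Real.exp (x / ε)) ^ 2)) * Geps ε x
        = Real.exp (x / ε) * Real.log (1 + Real.exp (x / ε)) / (1 + Real.exp (x / ε)) ^ 2 := by
      unfold Geps
      field_simp
    rw [this, div_pow, div_sub_div_same]
    exact div_nonneg (by nlinarith) (by positivity)

/-- Let `ε > 0`, `λ > 0`, `T > 0`. If for every channel `i` the
vectors `((φ_j(y_l))_{l=0,…,M})_{j∈I_i}` are linearly independent in `ℝ^{M+1}`, then the
regularized objective
`ω ↦ (1/T)·[−Σ_i Σ_k ln G_ε(Σ_{j∈I_i} ω_j φ_j(y_{l^{(i)}_k}))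
  + Σ_l t_l·Σ_i G_ε(Σ_{j∈I_i} ω_j φ_j(y_l))] + λ·Σ_j |ω_j|`
is strictly convex on all of `ℝ^N`. -/
theorem regularized_objective_strictly_convex
    (ε lam T : ℝ) (hε : 0 < ε) (hlam : 0 < lam) (hT : 0 < T)
    (N K M : ℕ) (hN : 1 ≤ N) (hK : 1 ≤ K) (hM : 1 ≤ M)
    (X : Type*) (φ : Fin N → X → ℝ)
    (I : Fin K → Finset (Fin N))
    (hpart : ∀ j : Fin N, ∃! i : Fin K, j ∈ I i)
    (y : Fin (M + 1) → X) (t : Fin (M + 1) → ℝ) (ht : ∀ l, 0 < t l)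
    (chan : Fin M → Fin K)
    (hli : ∀ i : Fin K, LinearIndependent ℝ
      (fun j : (I i : Finset (Fin N)) => fun l : Fin (M + 1) => φ j.1 (y l))) :
    StrictConvexOn ℝ Set.univ (fun ω : Fin N → ℝ =>
      (1 / T) *
        (-(∑ l : Fin M,
            Real.log (Geps ε (∑ j ∈ I (chan l), ω j * φ j (y l.castSucc))))
          + ∑ l : Fin (M + 1), t l *
              ∑ i : Fin K, Geps ε (∑ j ∈ I i, ω j * φ j (y l)))
        + lam * ∑ j : Fin N, |ω j|) := by
  
  have hGs := Geps_strictConvexOn hε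
  have hGc : ConvexOn ℝ Set.univ (Geps ε) := hGs.convexOn
  have hLc := negLogGeps_convexOn hε
  refine ⟨convex_univ, fun p _ q _ hpq a b ha hb hab => ?_⟩
  have hz : ∀ j, (a • p + b • q) j = a * p j + b * q j := by
    intro j; simp [smul_eq_mul]
  have hS : ∀ (i : Fin K) (l : Fin (M + 1)),
      (∑ j ∈ I i, (a • p + b • q) j * φ j (y l))
        = a * (∑ j ∈ I i, p j * φ j (y l)) + b * (∑ j ∈ I i, q j * φ j (y l)) := by
    intro i l
    rw [Finset.mul_sum, Finset.mul_sum, ← Finset.sum_add_distrib]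
    exact Finset.sum_congr rfl fun j _ => by rw [hz]; ring
  obtain ⟨j0, hj0⟩ := Function.ne_iff.mp hpq
  obtain ⟨i0, hji0, -⟩ := hpart j0
  -- find a time index where the channel-i0 linear forms differ
  have hexl : ∃ l : Fin (M + 1), ∑ j ∈ I i0, (p j - q j) * φ j (y l) ≠ 0 := by
    by_contra h
    push_neg at h
    have hli0 := (Fintype.linearIndependent_iff.mp (hli i0))
      (fun j => p j.1 - q j.1) ?_ ⟨j0, hji0⟩
    · exact hj0 (by linarith [hli0] : p j0 = q j0)
    · funext l
      simp only [Finset.sum_apply, Pi.smul_apply, smul_eq_mul, Finset.univ_eq_attach,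
        Pi.zero_apply]
      rw [Finset.sum_attach (I i0) (fun j => (p j - q j) * φ j (y l))]
      exact h l
  obtain ⟨ls, hls⟩ := hexl
  have hne : (∑ j ∈ I i0, p j * φ j (y ls)) ≠ ∑ j ∈ I i0, q j * φ j (y ls) := by
    intro hEq
    apply hls
    rw [show (∑ j ∈ I i0, (p j - q j) * φ j (y ls))
        = (∑ j ∈ I i0, p j * φ j (y ls)) - ∑ j ∈ I i0, q j * φ j (y ls) by
      rw [← Finset.sum_sub_distrib]; exact Finset.sum_congr rfl fun j _ => by ring, hEq,
      sub_self]
  have hG2 : ∀ u v : ℝ, Geps ε (a * u + b * v) ≤ a * Geps ε u + b * Geps ε v := fun u v => by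
    simpa [smul_eq_mul] using hGc.2 (Set.mem_univ u) (Set.mem_univ v) ha.le hb.le hab
  have hG2s : ∀ u v : ℝ, u ≠ v →
      Geps ε (a * u + b * v) < a * Geps ε u + b * Geps ε v := fun u v huv => by
    simpa [smul_eq_mul] using hGs.2 (Set.mem_univ u) (Set.mem_univ v) huv ha hb hab
  have hL2 : ∀ u v : ℝ, -Real.log (Geps ε (a * u + b * v))
      ≤ a * -Real.log (Geps ε u) + b * -Real.log (Geps ε v) := fun u v => by
    simpa [smul_eq_mul] using hLc.2 (Set.mem_univ u) (Set.mem_univ v) ha.le hb.le hab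
  -- term A
  have hA : -(∑ l : Fin M,
        Real.log (Geps ε (∑ j ∈ I (chan l), (a • p + b • q) j * φ j (y l.castSucc))))
      ≤ a * -(∑ l : Fin M,
          Real.log (Geps ε (∑ j ∈ I (chan l), p j * φ j (y l.castSucc))))
        + b * -(∑ l : Fin M,
          Real.log (Geps ε (∑ j ∈ I (chan l), q j * φ j (y l.castSucc)))) := by
    have h1 : ∀ l : Fin M,
        -Real.log (Geps ε (∑ j ∈ I (chan l), (a • p + b • q) j * φ j (y l.castSucc)))
        ≤ a * -Real.log (Geps ε (∑ j ∈ I (chan l), p j * φ j (y l.castSucc)))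
          + b * -Real.log (Geps ε (∑ j ∈ I (chan l), q j * φ j (y l.castSucc))) := by
      intro l; rw [hS]; exact hL2 _ _
    have h2 := Finset.sum_le_sum fun l (_ : l ∈ Finset.univ) => h1 l
    rw [Finset.sum_add_distrib, ← Finset.mul_sum, ← Finset.mul_sum] at h2
    simpa [Finset.sum_neg_distrib, mul_neg] using h2
  -- term B (strict)
  have hB : (∑ l : Fin (M + 1), t l *
        ∑ i : Fin K, Geps ε (∑ j ∈ I i, (a • p + b • q) j * φ j (y l)))
      < a * (∑ l : Fin (M + 1), t l * ∑ i : Fin K, Geps ε (∑ j ∈ I i, p j * φ j (y l)))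
        + b * (∑ l : Fin (M + 1), t l * ∑ i : Fin K, Geps ε (∑ j ∈ I i, q j * φ j (y l))) := by
    have hinner : ∀ l : Fin (M + 1),
        (∑ i : Fin K, Geps ε (∑ j ∈ I i, (a • p + b • q) j * φ j (y l)))
        ≤ a * (∑ i : Fin K, Geps ε (∑ j ∈ I i, p j * φ j (y l)))
          + b * (∑ i : Fin K, Geps ε (∑ j ∈ I i, q j * φ j (y l))) := by
      intro l
      rw [Finset.mul_sum, Finset.mul_sum, ← Finset.sum_add_distrib]
      exact Finset.sum_le_sum fun i _ => by rw [hS]; exact hG2 _ _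
    have hinnerS :
        (∑ i : Fin K, Geps ε (∑ j ∈ I i, (a • p + b • q) j * φ j (y ls)))
        < a * (∑ i : Fin K, Geps ε (∑ j ∈ I i, p j * φ j (y ls)))
          + b * (∑ i : Fin K, Geps ε (∑ j ∈ I i, q j * φ j (y ls))) := by
      rw [Finset.mul_sum, Finset.mul_sum, ← Finset.sum_add_distrib]
      refine Finset.sum_lt_sum (fun i _ => by rw [hS]; exact hG2 _ _)
        ⟨i0, Finset.mem_univ _, by rw [hS]; exact hG2s _ _ hne⟩
    have h2 := Finset.sum_lt_sum
      (f := fun l : Fin (M + 1) => t l *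
        ∑ i : Fin K, Geps ε (∑ j ∈ I i, (a • p + b • q) j * φ j (y l)))
      (g := fun l : Fin (M + 1) =>
        a * (t l * ∑ i : Fin K, Geps ε (∑ j ∈ I i, p j * φ j (y l)))
        + b * (t l * ∑ i : Fin K, Geps ε (∑ j ∈ I i, q j * φ j (y l))))
      (fun l _ => by
        have := mul_le_mul_of_nonneg_left (hinner l) (ht l).le
        linarith [this, (by ring : t l * (a * (∑ i : Fin K, Geps ε (∑ j ∈ I i, p j * φ j (y l))) + b * ∑ i : Fin K, Geps ε (∑ j ∈ I i, q j * φ j (y l))) = a * (t l * ∑ i : Fin K, Geps ε (∑ j ∈ I i, p j * φ j (y l))) + b * (t l * ∑ i : Fin K, Geps ε (∑ j ∈ I i, q j * φ j (y l))))])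
      ⟨ls, Finset.mem_univ _, by
        have := mul_lt_mul_of_pos_left hinnerS (ht ls)
        linarith [this, (by ring : t ls * (a * (∑ i : Fin K, Geps ε (∑ j ∈ I i, p j * φ j (y ls))) + b * ∑ i : Fin K, Geps ε (∑ j ∈ I i, q j * φ j (y ls))) = a * (t ls * ∑ i : Fin K, Geps ε (∑ j ∈ I i, p j * φ j (y ls))) + b * (t ls * ∑ i : Fin K, Geps ε (∑ j ∈ I i, q j * φ j (y ls))))]⟩
    rw [Finset.sum_add_distrib, ← Finset.mul_sum, ← Finset.mul_sum] at h2
    exact h2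
  -- term C
  have hC : (∑ j : Fin N, |(a • p + b • q) j|)
      ≤ a * (∑ j : Fin N, |p j|) + b * (∑ j : Fin N, |q j|) := by
    rw [Finset.mul_sum, Finset.mul_sum, ← Finset.sum_add_distrib]
    refine Finset.sum_le_sum fun j _ => ?_
    rw [hz]
    calc |a * p j + b * q j| ≤ |a * p j| + |b * q j| := abs_add_le _ _
      _ = a * |p j| + b * |q j| := by
          rw [abs_mul, abs_mul, abs_of_pos ha, abs_of_pos hb]
  have hTi : (0:ℝ) < 1 / T := by positivity
  simp only [smul_eq_mul]
  have h1 := mul_le_mul_of_nonneg_left hA hTi.le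
  have h2 := mul_lt_mul_of_pos_left hB hTi
  have h3 := mul_le_mul_of_nonneg_left hC hlam.le
  nlinarith [h1, h2, h3]
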